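/- Let p be a prime, n, m, l ≥ 1, R = GR(p^n,m) = (ZMod (p^n))[X]/(f) for a monic basic irreducible f of degree m, ρ ∈ R[X] monic of degree l with reduction modulo (p) irreducible over the residue field R/(p), and S = R[X]/(ρ). Then the group of R-algebra automorphisms of S is cyclic of order l; moreover, it is generated by an automorphism σ that satisfies σ(y) = y^{p^m} for every y ∈ S with y^{p^{ml}} = y (i.e. σ acts as the p^m-th power map on the Teichmüller set of S). -/

import Mathlib

open Polynomial

/-- If the residue of `z` is a unit and the kernel of `π` consists of nilpotents,
then `z` is a unit. -/
private lemma aux_isUnit_of_residue {S k : Type*} [CommRing S] [CommRing k] (π : S →+* k)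
    (hsurj : Function.Surjective π) (hker : ∀ z : S, π z = 0 → IsNilpotent z)
    {z : S} (h : IsUnit (π z)) : IsUnit z := by
  obtain ⟨w, hw⟩ := h.exists_right_inv
  obtain ⟨w', rfl⟩ := hsurj w
  have hnil : IsNilpotent (z * w' - 1) := by
    apply hker
    rw [map_sub, map_mul, hw, map_one, sub_self]
  have h2 : IsUnit (z * w') := by
    have h3 := hnil.isUnit_add_left_of_commute isUnit_one (Commute.all _ _)
    have h4 : 1 + (z * w' - 1) = z * w' := by ring
    rwa [h4] at h3
  exact isUnit_of_mul_isUnit_left h2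

/-- Uniqueness of Teichmüller representatives: two `Q`-th-power-fixed points with the same
residue are equal, provided the kernel of `π` consists of nilpotents and `Q = 0` in `k`. -/
private lemma aux_teich_unique {S k : Type*} [CommRing S] [CommRing k] (π : S →+* k)
    (hker : ∀ z : S, π z = 0 → IsNilpotent z) {Q : ℕ} (hQ : (Q : k) = 0)
    {y z : S} (hy : y ^ Q = y) (hz : z ^ Q = z) (hyz : π y = π z) : y = z := by
  have key : (∑ i ∈ Finset.range Q, y ^ i * z ^ (Q - 1 - i)) * (y - z) = y - z := by
    rw [geom_sum₂_mul, hy, hz]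
  set c := ∑ i ∈ Finset.range Q, y ^ i * z ^ (Q - 1 - i) with hc
  have hπc : π c = 0 := by
    have h1 : π c = ∑ i ∈ Finset.range Q, (π y) ^ i * (π y) ^ (Q - 1 - i) := by
      rw [hc, map_sum]
      refine Finset.sum_congr rfl fun i hi => ?_
      rw [map_mul, map_pow, map_pow, hyz]
    have h2 : ∀ i ∈ Finset.range Q, (π y) ^ i * (π y) ^ (Q - 1 - i) = (π y) ^ (Q - 1) := by
      intro i hi
      rw [← pow_add]
      congr 1
      rw [Finset.mem_range] at hi
      omega
    rw [h1, Finset.sum_congr rfl h2, Finset.sum_const, Finset.card_range, nsmul_eq_mul, hQ,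
      zero_mul]
  have hcu : IsUnit (1 - c) := (hker c hπc).isUnit_one_sub
  have hzero : (1 - c) * (y - z) = 0 := by
    rw [sub_mul, one_mul, key, sub_self]
  rw [hcu.mul_right_eq_zero] at hzero
  exact sub_eq_zero.mp hzero

set_option maxHeartbeats 1000000 in
/-- Let `R = GR(p^n, m)` and `S = R[X]/(ρ) = GR(p^n, m*l)` for a monic
`ρ` of degree `l` whose reduction mod `(p)` is irreducible over `R/(p)`. Then the group of
`R`-algebra automorphisms of `S` is cyclic of order `l`, generated by an automorphism `σ`
that acts as the `p^m`-th power map on the Teichmüller set `{y : y ^ (p^(m*l)) = y}`. -/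
theorem galois_ring_automorphism_group_cyclic (p n m l : ℕ) (hp : p.Prime)
    (hn : 0 < n) (hm : 0 < m) (hl : 0 < l)
    (f : Polynomial (ZMod (p ^ n))) (hf : f.Monic) (hdeg : f.natDegree = m)
    (hirr : Irreducible (f.map (ZMod.castHom (dvd_pow_self p hn.ne') (ZMod p))))
    (ρ : Polynomial (AdjoinRoot f)) (hρ : ρ.Monic) (hρdeg : ρ.natDegree = l)
    (hρirr : Irreducible
      (ρ.map (Ideal.Quotient.mk (Ideal.span {(p : AdjoinRoot f)})))) :
    ∃ σ : AdjoinRoot ρ ≃ₐ[AdjoinRoot f] AdjoinRoot ρ,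
      orderOf σ = l ∧
      (∀ τ : AdjoinRoot ρ ≃ₐ[AdjoinRoot f] AdjoinRoot ρ, τ ∈ Subgroup.zpowers σ) ∧
      (∀ y : AdjoinRoot ρ, y ^ p ^ (m * l) = y → σ y = y ^ p ^ m) := by
  classical
  haveI : Fact p.Prime := ⟨hp⟩
  haveI : NeZero (p ^ n) := ⟨pow_ne_zero _ hp.pos.ne'⟩
  -- `p` is nilpotent in `R` and in `S`
  have hpS : (p : AdjoinRoot ρ) ^ n = 0 := by
    have h0 : ((p ^ n : ℕ) : AdjoinRoot ρ) = 0 := by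
      rw [← map_natCast (AdjoinRoot.of ρ), ← map_natCast (AdjoinRoot.of f), ZMod.natCast_self,
        map_zero, map_zero]
    push_cast at h0
    exact h0
  set I₀ := Ideal.span {(p : ZMod (p ^ n))} with hI₀
  set IR := Ideal.span {(p : AdjoinRoot f)} with hIR
  set IS := Ideal.span {(p : AdjoinRoot ρ)} with hIS
  -- kernel of the residue map of S consists of nilpotents
  have hkS : ∀ z : AdjoinRoot ρ, Ideal.Quotient.mk IS z = 0 → IsNilpotent z := by
    intro z hz
    rw [Ideal.Quotient.eq_zero_iff_mem, hIS, Ideal.mem_span_singleton] at hz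
    obtain ⟨t, rfl⟩ := hz
    exact ⟨n, by rw [mul_pow, hpS, zero_mul]⟩
  have hπsurj : Function.Surjective (Ideal.Quotient.mk IS) := Ideal.Quotient.mk_surjective
  have hunit : ∀ z : AdjoinRoot ρ, IsUnit (Ideal.Quotient.mk IS z) → IsUnit z :=
    fun z h => aux_isUnit_of_residue _ hπsurj hkS h
  -- the kernel of the cast `ZMod (p^n) → ZMod p` is `(p)`
  have hker0 : RingHom.ker (ZMod.castHom (dvd_pow_self p hn.ne') (ZMod p)) = I₀ := by
    ext x
    rw [RingHom.mem_ker, hI₀, Ideal.mem_span_singleton]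
    constructor
    · intro hx
      rw [ZMod.castHom_apply] at hx
      have h1 : ((x.val : ℕ) : ZMod p) = 0 := by rw [ZMod.natCast_val]; exact hx
      have h2 : p ∣ x.val := (ZMod.natCast_eq_zero_iff _ _).mp h1
      obtain ⟨t, ht⟩ := h2
      refine ⟨(t : ZMod (p ^ n)), ?_⟩
      have h3 : ((x.val : ℕ) : ZMod (p ^ n)) = x := ZMod.natCast_zmod_val x
      rw [← h3, ht]
      push_cast
      ring
    · rintro ⟨t, rfl⟩
      rw [map_mul, map_natCast, ZMod.natCast_self, zero_mul]
  have hI₀le : ∀ a ∈ I₀, ZMod.castHom (dvd_pow_self p hn.ne') (ZMod p) a = 0 := by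
    intro a ha
    rw [← RingHom.mem_ker, hker0]
    exact ha
  -- a ring equivalence `ZMod (p^n) ⧸ (p) ≃+* ZMod p`, compatible with the quotient map
  obtain ⟨e₀, he₀⟩ : ∃ e : (ZMod (p ^ n) ⧸ I₀) ≃+* ZMod p,
      ∀ x, e (Ideal.Quotient.mk I₀ x) = ZMod.castHom (dvd_pow_self p hn.ne') (ZMod p) x := by
    have hinj : Function.Injective (Ideal.Quotient.lift I₀ _ hI₀le) :=
      RingHom.lift_injective_of_ker_le_ideal I₀ hI₀le (le_of_eq hker0)
    have hsurj : Function.Surjective (Ideal.Quotient.lift I₀ _ hI₀le) := by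
      intro y
      obtain ⟨x, hx⟩ := ZMod.ringHom_surjective (ZMod.castHom (dvd_pow_self p hn.ne') (ZMod p)) y
      exact ⟨Ideal.Quotient.mk I₀ x, by rw [Ideal.Quotient.lift_mk]; exact hx⟩
    refine ⟨RingEquiv.ofBijective _ ⟨hinj, hsurj⟩, fun x => ?_⟩
    exact Ideal.Quotient.lift_mk I₀ _ hI₀le
  set fbar := f.map (ZMod.castHom (dvd_pow_self p hn.ne') (ZMod p)) with hfbar
  haveI : Fact (Irreducible fbar) := ⟨hirr⟩
  -- transfer the field structure along `R ⧸ (p) ≃+* AdjoinRoot fbar`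
  have hmap0 : Ideal.map (AdjoinRoot.of f) I₀ = IR := by
    rw [hI₀, hIR, Ideal.map_span, Set.image_singleton, map_natCast]
  obtain ⟨ER⟩ : Nonempty ((AdjoinRoot f ⧸ IR) ≃+* AdjoinRoot fbar) := by
    refine ⟨(Ideal.quotEquivOfEq hmap0.symm).trans
      ((AdjoinRoot.quotAdjoinRootEquivQuotPolynomialQuot I₀ f).trans
        (Ideal.quotientEquiv _ _ (Polynomial.mapEquiv e₀) ?_))⟩
    rw [Ideal.map_span, Set.image_singleton]
    have hpoly : (Polynomial.mapEquiv e₀ : Polynomial (ZMod (p ^ n) ⧸ I₀) →+* Polynomial (ZMod p))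
        (f.map (Ideal.Quotient.mk I₀)) = fbar := by
      show Polynomial.mapEquiv e₀ (f.map (Ideal.Quotient.mk I₀)) = fbar
      rw [Polynomial.mapEquiv_apply, Polynomial.map_map, hfbar]
      congr 1
      exact RingHom.ext fun x => he₀ x
    rw [hpoly]
  have hkRfield : IsField (AdjoinRoot f ⧸ IR) :=
    MulEquiv.isField (Field.toIsField _) ER.toMulEquiv
  letI : Field (AdjoinRoot f ⧸ IR) := hkRfield.toField
  set ρbar := ρ.map (Ideal.Quotient.mk IR) with hρbar
  haveI : Fact (Irreducible ρbar) := ⟨hρirr⟩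
  have hmapR : Ideal.map (AdjoinRoot.of ρ) IR = IS := by
    rw [hIR, hIS, Ideal.map_span, Set.image_singleton, map_natCast]
  obtain ⟨EK⟩ : Nonempty ((AdjoinRoot ρ ⧸ IS) ≃+* AdjoinRoot ρbar) :=
    ⟨(Ideal.quotEquivOfEq hmapR.symm).trans
      (AdjoinRoot.quotAdjoinRootEquivQuotPolynomialQuot IR ρ)⟩
  have hkfield : IsField (AdjoinRoot ρ ⧸ IS) :=
    MulEquiv.isField (Field.toIsField _) EK.toMulEquiv
  letI : Field (AdjoinRoot ρ ⧸ IS) := hkfield.toField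
  -- cardinalities
  have hfbarmonic : fbar.Monic := hf.map _
  have hfbardeg : fbar.natDegree = m := by rw [hfbar, hf.natDegree_map, hdeg]
  letI : Fintype (AdjoinRoot fbar) := Module.fintypeOfFintype (AdjoinRoot.powerBasisAux' hfbarmonic)
  letI : Fintype (AdjoinRoot f ⧸ IR) := Fintype.ofEquiv _ ER.symm.toEquiv
  have hcardkR : Fintype.card (AdjoinRoot f ⧸ IR) = p ^ m := by
    rw [Fintype.card_congr ER.toEquiv,
      Module.card_fintype (AdjoinRoot.powerBasisAux' hfbarmonic), ZMod.card, Fintype.card_fin,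
      hfbardeg]
  have hρbarmonic : ρbar.Monic := hρ.map _
  have hρbardeg : ρbar.natDegree = l := by rw [hρbar, hρ.natDegree_map, hρdeg]
  letI : Fintype (AdjoinRoot ρbar) := Module.fintypeOfFintype (AdjoinRoot.powerBasisAux' hρbarmonic)
  letI : Fintype (AdjoinRoot ρ ⧸ IS) := Fintype.ofEquiv _ EK.symm.toEquiv
  have hcardk : Fintype.card (AdjoinRoot ρ ⧸ IS) = p ^ (m * l) := by
    rw [Fintype.card_congr EK.toEquiv,
      Module.card_fintype (AdjoinRoot.powerBasisAux' hρbarmonic), Fintype.card_fin, hρbardeg,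
      hcardkR, ← pow_mul]
  -- characteristic of the residue field
  have hp0 : ((p : ℕ) : AdjoinRoot ρ ⧸ IS) = 0 := by
    rw [← map_natCast (Ideal.Quotient.mk IS), Ideal.Quotient.eq_zero_iff_mem, hIS]
    exact Ideal.mem_span_singleton_self _
  haveI : CharP (AdjoinRoot ρ ⧸ IS) p := by
    obtain ⟨c, hc⟩ := CharP.exists (AdjoinRoot ρ ⧸ IS)
    haveI := hc
    have hdvd : c ∣ p := (CharP.cast_eq_zero_iff _ c p).mp hp0
    rcases hp.eq_one_or_self_of_dvd c hdvd with h1 | h2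
    · exfalso
      have h3 : ((c : ℕ) : AdjoinRoot ρ ⧸ IS) = 0 := CharP.cast_eq_zero _ c
      rw [h1] at h3
      simp at h3
    · rwa [h2] at hc
  haveI : ExpChar (AdjoinRoot ρ ⧸ IS) p := .prime hp
  -- the reduction homomorphism on coefficients
  have hle : IR ≤ IS.comap (AdjoinRoot.of ρ) := by
    rw [hIR, Ideal.span_le, Set.singleton_subset_iff]
    show (AdjoinRoot.of ρ) (p : AdjoinRoot f) ∈ IS
    rw [map_natCast, hIS]
    exact Ideal.mem_span_singleton_self _
  set ι := Ideal.quotientMap IS (AdjoinRoot.of ρ) hle with hι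
  set πof := (Ideal.Quotient.mk IS).comp (AdjoinRoot.of ρ) with hπof
  have hιcomp : ∀ c, ι (Ideal.Quotient.mk IR c) = πof c := by
    intro c
    rw [hι, Ideal.quotientMap_mk, hπof, RingHom.comp_apply]
  -- constants are fixed by the `p^m`-th power map
  have hconst : ∀ c : AdjoinRoot f, (πof c) ^ p ^ m = πof c := by
    intro c
    rw [← hιcomp c, ← map_pow]
    congr 1
    have h1 := FiniteField.pow_card (Ideal.Quotient.mk IR c)
    rwa [hcardkR] at h1
  have hconstj : ∀ (j : ℕ) (c : AdjoinRoot f), (πof c) ^ p ^ (m * j) = πof c := by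
    intro j c
    induction j with
    | zero => simp
    | succ j ih => rw [Nat.mul_succ, pow_add, pow_mul, ih, hconst]
  -- Frobenius compatibility of `eval₂`
  have hfrob : ∀ (j : ℕ) (α : AdjoinRoot ρ ⧸ IS) (q : Polynomial (AdjoinRoot f)),
      (Polynomial.eval₂ πof α q) ^ p ^ (m * j) = Polynomial.eval₂ πof (α ^ p ^ (m * j)) q := by
    intro j α q
    have hcomp : (iterateFrobenius (AdjoinRoot ρ ⧸ IS) p (m * j)).comp πof = πof :=
      RingHom.ext fun c => by rw [RingHom.comp_apply, iterateFrobenius_def]; exact hconstj j c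
    have h2 := Polynomial.hom_eval₂ q πof (iterateFrobenius (AdjoinRoot ρ ⧸ IS) p (m * j)) α
    rw [hcomp] at h2
    simpa only [iterateFrobenius_def] using h2
  -- reduction of `aeval`
  have hπaeval : ∀ (x : AdjoinRoot ρ) (q : Polynomial (AdjoinRoot f)),
      Ideal.Quotient.mk IS (Polynomial.aeval x q) =
        Polynomial.eval₂ πof (Ideal.Quotient.mk IS x) q := by
    intro x q
    rw [Polynomial.aeval_def, Polynomial.hom_eval₂]
    congr 1
  -- the root of ρ and its residue
  have hrroot : Polynomial.aeval (AdjoinRoot.root ρ) ρ = 0 := by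
    rw [Polynomial.aeval_def, AdjoinRoot.algebraMap_eq]
    exact AdjoinRoot.eval₂_root ρ
  have hρres : Polynomial.eval₂ πof (Ideal.Quotient.mk IS (AdjoinRoot.root ρ)) ρ = 0 := by
    rw [← hπaeval, hrroot, map_zero]
  have hrootpow : ∀ j : ℕ,
      Polynomial.eval₂ πof ((Ideal.Quotient.mk IS (AdjoinRoot.root ρ)) ^ p ^ (m * j)) ρ = 0 := by
    intro j
    rw [← hfrob, hρres, zero_pow (pow_ne_zero _ hp.pos.ne')]
  -- separability: the derivative is a unit at any root of the reduction
  have hder : ∀ α : AdjoinRoot ρ ⧸ IS, Polynomial.eval₂ πof α ρ = 0 →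
      IsUnit (Polynomial.eval₂ πof α (Polynomial.derivative ρ)) := by
    intro α hα
    have hsep : ρbar.Separable := PerfectField.separable_of_irreducible hρirr
    obtain ⟨u, v, huv⟩ := hsep
    have h1 : ∀ q : Polynomial (AdjoinRoot f),
        Polynomial.eval₂ ι α (q.map (Ideal.Quotient.mk IR)) = Polynomial.eval₂ πof α q := by
      intro q
      rw [Polynomial.eval₂_map]
      congr 1
    have happ : Polynomial.eval₂ ι α (u * ρbar + v * Polynomial.derivative ρbar) = 1 := by
      rw [huv, Polynomial.eval₂_one]
    rw [Polynomial.eval₂_add, Polynomial.eval₂_mul, Polynomial.eval₂_mul, hρbar, h1, hα,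
      mul_zero, zero_add, Polynomial.derivative_map, h1] at happ
    rw [mul_comm] at happ
    exact IsUnit.of_mul_eq_one _ happ
  -- Hensel lifting of roots
  have hlift : ∀ x₀ : AdjoinRoot ρ, Polynomial.eval₂ πof (Ideal.Quotient.mk IS x₀) ρ = 0 →
      ∃ rr : AdjoinRoot ρ, Polynomial.aeval rr ρ = 0 ∧
        Ideal.Quotient.mk IS rr = Ideal.Quotient.mk IS x₀ := by
    intro x₀ h0
    have hnil : IsNilpotent (Polynomial.aeval x₀ ρ) := hkS _ (by rw [hπaeval]; exact h0)
    have hderu : IsUnit (Polynomial.aeval x₀ (Polynomial.derivative ρ)) := by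
      apply hunit
      rw [hπaeval]
      exact hder _ h0
    obtain ⟨rr, ⟨hnil', hroot⟩, -⟩ :=
      Polynomial.existsUnique_nilpotent_sub_and_aeval_eq_zero hnil hderu
    refine ⟨rr, hroot, ?_⟩
    have h2 : Ideal.Quotient.mk IS (x₀ - rr) = 0 :=
      (hnil'.map (Ideal.Quotient.mk IS)).eq_zero
    rw [map_sub, sub_eq_zero] at h2
    exact h2.symm
  -- uniqueness of roots with a given residue
  have huniq : ∀ a b : AdjoinRoot ρ, Polynomial.aeval a ρ = 0 → Polynomial.aeval b ρ = 0 →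
      Ideal.Quotient.mk IS a = Ideal.Quotient.mk IS b → a = b := by
    intro a b ha hb hab
    have hπa : Polynomial.eval₂ πof (Ideal.Quotient.mk IS a) ρ = 0 := by
      rw [← hπaeval, ha, map_zero]
    have hnil : IsNilpotent (Polynomial.aeval a ρ) := by rw [ha]; exact IsNilpotent.zero
    have hderu : IsUnit (Polynomial.aeval a (Polynomial.derivative ρ)) := by
      apply hunit
      rw [hπaeval]
      exact hder _ hπa
    obtain ⟨rr, -, hu⟩ := Polynomial.existsUnique_nilpotent_sub_and_aeval_eq_zero hnil hderu
    have h1 := hu a ⟨by simp, ha⟩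
    have h2 := hu b ⟨hkS _ (by rw [map_sub, hab, sub_self]), hb⟩
    rw [h1, h2]
  -- lift the two roots needed to define σ and its inverse
  obtain ⟨r₁, hr₁root, hr₁res⟩ := hlift ((AdjoinRoot.root ρ) ^ p ^ m) (by
    rw [map_pow]
    have h := hrootpow 1
    rwa [mul_one] at h)
  have hr₁res' : Ideal.Quotient.mk IS r₁ =
      (Ideal.Quotient.mk IS (AdjoinRoot.root ρ)) ^ p ^ m := by
    rw [hr₁res, map_pow]
  obtain ⟨r₂, hr₂root, hr₂res⟩ := hlift ((AdjoinRoot.root ρ) ^ p ^ (m * (l - 1)))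
    (by rw [map_pow]; exact hrootpow (l - 1))
  have hr₂res' : Ideal.Quotient.mk IS r₂ =
      (Ideal.Quotient.mk IS (AdjoinRoot.root ρ)) ^ p ^ (m * (l - 1)) := by
    rw [hr₂res, map_pow]
  set σ0 : AdjoinRoot ρ →ₐ[AdjoinRoot f] AdjoinRoot ρ := AdjoinRoot.liftAlgHom ρ (Algebra.ofId (AdjoinRoot f) (AdjoinRoot ρ)) r₁
    (by rw [Algebra.toRingHom_ofId, ← Polynomial.aeval_def]; exact hr₁root) with hσ0
  set τ0 : AdjoinRoot ρ →ₐ[AdjoinRoot f] AdjoinRoot ρ := AdjoinRoot.liftAlgHom ρ (Algebra.ofId (AdjoinRoot f) (AdjoinRoot ρ)) r₂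
    (by rw [Algebra.toRingHom_ofId, ← Polynomial.aeval_def]; exact hr₂root) with hτ0
  -- residue action of σ0 and τ0
  have hresσ0 : ∀ x : AdjoinRoot ρ,
      Ideal.Quotient.mk IS (σ0 x) = (Ideal.Quotient.mk IS x) ^ p ^ m := by
    intro x
    obtain ⟨P, rfl⟩ := AdjoinRoot.mk_surjective x
    rw [hσ0]
    rw [AdjoinRoot.liftAlgHom_mk, Algebra.toRingHom_ofId, ← Polynomial.aeval_def, hπaeval, hr₁res']
    have h := hfrob 1 (Ideal.Quotient.mk IS (AdjoinRoot.root ρ)) P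
    rw [mul_one] at h
    rw [← h, ← hπaeval, AdjoinRoot.aeval_eq]
  have hresτ0 : ∀ x : AdjoinRoot ρ,
      Ideal.Quotient.mk IS (τ0 x) = (Ideal.Quotient.mk IS x) ^ p ^ (m * (l - 1)) := by
    intro x
    obtain ⟨P, rfl⟩ := AdjoinRoot.mk_surjective x
    rw [hτ0]
    rw [AdjoinRoot.liftAlgHom_mk, Algebra.toRingHom_ofId, ← Polynomial.aeval_def, hπaeval, hr₂res', ← hfrob, ← hπaeval, AdjoinRoot.aeval_eq]
  -- all residues are fixed by `p^(m*l)`-th power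
  have hQcard : ∀ α : AdjoinRoot ρ ⧸ IS, α ^ p ^ (m * l) = α := by
    intro α
    have h := FiniteField.pow_card α
    rwa [hcardk] at h
  have hexp1 : p ^ m * p ^ (m * (l - 1)) = p ^ (m * l) := by
    rw [← pow_add]
    congr 1
    obtain ⟨l', rfl⟩ := Nat.exists_eq_succ_of_ne_zero hl.ne'
    simp [Nat.mul_succ]
    ring
  have hexp2 : p ^ (m * (l - 1)) * p ^ m = p ^ (m * l) := by rw [mul_comm, hexp1]
  -- composite fixes the root
  have hτroot0 : ∀ (φ : AdjoinRoot ρ →ₐ[AdjoinRoot f] AdjoinRoot ρ),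
      Polynomial.aeval (φ (AdjoinRoot.root ρ)) ρ = 0 := by
    intro φ
    rw [Polynomial.aeval_algHom_apply, hrroot, map_zero]
  have hcomp1 : τ0 (σ0 (AdjoinRoot.root ρ)) = AdjoinRoot.root ρ := by
    refine huniq _ _ ?_ hrroot ?_
    · exact hτroot0 (τ0.comp σ0)
    · rw [hresτ0, hresσ0, ← pow_mul, hexp1, hQcard]
  have hcomp2 : σ0 (τ0 (AdjoinRoot.root ρ)) = AdjoinRoot.root ρ := by
    refine huniq _ _ ?_ hrroot ?_
    · exact hτroot0 (σ0.comp τ0)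
    · rw [hresσ0, hresτ0, ← pow_mul, hexp2, hQcard]
  set σ : AdjoinRoot ρ ≃ₐ[AdjoinRoot f] AdjoinRoot ρ :=
    AlgEquiv.ofAlgHom σ0 τ0
      (AdjoinRoot.algHom_ext (by simpa using hcomp2))
      (AdjoinRoot.algHom_ext (by simpa using hcomp1)) with hσ
  have hσapp : ∀ x, σ x = σ0 x := fun x => rfl
  have hresσ : ∀ x : AdjoinRoot ρ,
      Ideal.Quotient.mk IS (σ x) = (Ideal.Quotient.mk IS x) ^ p ^ m := by
    intro x
    rw [hσapp]
    exact hresσ0 x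
  -- extensionality for automorphisms via the root
  have hext : ∀ φ ψ : AdjoinRoot ρ ≃ₐ[AdjoinRoot f] AdjoinRoot ρ,
      φ (AdjoinRoot.root ρ) = ψ (AdjoinRoot.root ρ) → φ = ψ := by
    intro φ ψ h
    have h2 : (φ : AdjoinRoot ρ →ₐ[AdjoinRoot f] AdjoinRoot ρ) = ψ := AdjoinRoot.algHom_ext h
    exact AlgEquiv.ext fun x => DFunLike.congr_fun h2 x
  -- residue action of powers of σ
  have hpowres : ∀ (j : ℕ) (x : AdjoinRoot ρ),
      Ideal.Quotient.mk IS ((σ ^ j) x) = (Ideal.Quotient.mk IS x) ^ p ^ (m * j) := by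
    intro j
    induction j with
    | zero => intro x; simp
    | succ j ih =>
      intro x
      rw [pow_succ, AlgEquiv.mul_apply, ih (σ x), hresσ, ← pow_mul, ← pow_add]
      congr 2
      ring
  have hτroot : ∀ τ : AdjoinRoot ρ ≃ₐ[AdjoinRoot f] AdjoinRoot ρ,
      Polynomial.aeval (τ (AdjoinRoot.root ρ)) ρ = 0 := by
    intro τ
    rw [Polynomial.aeval_algHom_apply, hrroot, map_zero]
  -- σ ^ l = 1
  have hσl : σ ^ l = 1 := by
    apply hext
    rw [AlgEquiv.one_apply]
    apply huniq _ _ (hτroot (σ ^ l)) hrroot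
    rw [hpowres, hQcard]
  have horddvd : orderOf σ ∣ l := orderOf_dvd_of_pow_eq_one hσl
  have hordpos : 0 < orderOf σ :=
    (isOfFinOrder_iff_pow_eq_one.mpr ⟨l, hl, hσl⟩).orderOf_pos
  -- every residue is a polynomial in the residue of the root
  have hsurjk : ∀ z : AdjoinRoot ρ ⧸ IS, ∃ P : Polynomial (AdjoinRoot f),
      z = Polynomial.eval₂ πof (Ideal.Quotient.mk IS (AdjoinRoot.root ρ)) P := by
    intro z
    obtain ⟨x, rfl⟩ := hπsurj z
    obtain ⟨P, rfl⟩ := AdjoinRoot.mk_surjective x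
    exact ⟨P, by rw [← AdjoinRoot.aeval_eq, hπaeval]⟩
  -- order of σ is exactly l
  have hord : orderOf σ = l := by
    by_contra hne
    have hlt : orderOf σ < l := lt_of_le_of_ne (Nat.le_of_dvd hl horddvd) hne
    have hd1 : σ ^ orderOf σ = 1 := pow_orderOf_eq_one σ
    have hrfix : (Ideal.Quotient.mk IS (AdjoinRoot.root ρ)) ^ p ^ (m * orderOf σ) =
        Ideal.Quotient.mk IS (AdjoinRoot.root ρ) := by
      have h := hpowres (orderOf σ) (AdjoinRoot.root ρ)
      rw [hd1, AlgEquiv.one_apply] at h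
      exact h.symm
    have hallfix : ∀ z : AdjoinRoot ρ ⧸ IS, z ^ p ^ (m * orderOf σ) = z := by
      intro z
      obtain ⟨P, rfl⟩ := hsurjk z
      rw [hfrob, hrfix]
    have hNpos : 1 < p ^ (m * orderOf σ) :=
      Nat.one_lt_pow (by positivity) hp.one_lt
    set g : Polynomial (AdjoinRoot ρ ⧸ IS) := X ^ p ^ (m * orderOf σ) - X with hg
    have hgdeg : g.natDegree = p ^ (m * orderOf σ) := by
      rw [hg]
      rw [Polynomial.natDegree_eq_of_degree_eq
        (Polynomial.degree_sub_eq_left_of_degree_lt (by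
          rw [Polynomial.degree_X, Polynomial.degree_X_pow]
          exact_mod_cast hNpos)), Polynomial.natDegree_X_pow]
    have hgne : g ≠ 0 := by
      intro h0
      rw [h0, Polynomial.natDegree_zero] at hgdeg
      omega
    have hsub : (Finset.univ : Finset (AdjoinRoot ρ ⧸ IS)) ⊆ g.roots.toFinset := by
      intro z _
      rw [Multiset.mem_toFinset, Polynomial.mem_roots hgne]
      show g.eval z = 0
      rw [hg]
      simp [hallfix z]
    have hcard_le : Fintype.card (AdjoinRoot ρ ⧸ IS) ≤ p ^ (m * orderOf σ) := by
      calc Fintype.card (AdjoinRoot ρ ⧸ IS) = (Finset.univ : Finset (AdjoinRoot ρ ⧸ IS)).card :=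
            Finset.card_univ.symm
        _ ≤ g.roots.toFinset.card := Finset.card_le_card hsub
        _ ≤ Multiset.card g.roots := g.roots.toFinset_card_le
        _ ≤ g.natDegree := g.card_roots'
        _ = p ^ (m * orderOf σ) := hgdeg
    rw [hcardk] at hcard_le
    have hltpow : p ^ (m * orderOf σ) < p ^ (m * l) :=
      Nat.pow_lt_pow_right hp.one_lt ((Nat.mul_lt_mul_left hm).mpr hlt)
    omega
  -- every automorphism lies in the powers of σ
  have hAutmap : ∀ τ : AdjoinRoot ρ ≃ₐ[AdjoinRoot f] AdjoinRoot ρ,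
      Ideal.Quotient.mk IS (τ (AdjoinRoot.root ρ)) ∈ (ρ.map πof).roots.toFinset := by
    intro τ
    rw [Multiset.mem_toFinset, Polynomial.mem_roots ((hρ.map πof).ne_zero)]
    show (ρ.map πof).eval _ = 0
    rw [Polynomial.eval_map, ← hπaeval, hτroot, map_zero]
  have hAutInj : Function.Injective
      (fun τ : AdjoinRoot ρ ≃ₐ[AdjoinRoot f] AdjoinRoot ρ =>
        Ideal.Quotient.mk IS (τ (AdjoinRoot.root ρ))) := by
    intro τ τ' h
    exact hext _ _ (huniq _ _ (hτroot τ) (hτroot τ') h)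
  haveI hfinAut : Finite (AdjoinRoot ρ ≃ₐ[AdjoinRoot f] AdjoinRoot ρ) :=
    Finite.of_injective _ hAutInj
  have hTcard : (ρ.map πof).roots.toFinset.card ≤ l := by
    calc (ρ.map πof).roots.toFinset.card ≤ Multiset.card (ρ.map πof).roots :=
          (ρ.map πof).roots.toFinset_card_le
      _ ≤ (ρ.map πof).natDegree := (ρ.map πof).card_roots'
      _ = l := by rw [hρ.natDegree_map, hρdeg]
  have hcardAut : Nat.card (AdjoinRoot ρ ≃ₐ[AdjoinRoot f] AdjoinRoot ρ) ≤ l := by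
    have h1 : Nat.card (AdjoinRoot ρ ≃ₐ[AdjoinRoot f] AdjoinRoot ρ) ≤
        Nat.card ↥((ρ.map πof).roots.toFinset) := by
      apply Nat.card_le_card_of_injective
        (fun τ => (⟨_, hAutmap τ⟩ : ↥((ρ.map πof).roots.toFinset)))
      intro a b hab
      exact hAutInj (congrArg Subtype.val hab)
    rw [Nat.card_eq_finsetCard] at h1
    exact h1.trans hTcard
  have hcardzp : Nat.card (Subgroup.zpowers σ) = l := by rw [Nat.card_zpowers, hord]
  have hzple : Nat.card (Subgroup.zpowers σ) ≤
      Nat.card (AdjoinRoot ρ ≃ₐ[AdjoinRoot f] AdjoinRoot ρ) :=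
    Nat.card_le_card_of_injective _ Subtype.val_injective
  have htop : Subgroup.zpowers σ = ⊤ := by
    apply Subgroup.eq_top_of_card_eq
    omega
  -- conclusion
  refine ⟨σ, hord, fun τ => htop ▸ Subgroup.mem_top τ, fun y hy => ?_⟩
  have hQ0 : ((p ^ (m * l) : ℕ) : AdjoinRoot ρ ⧸ IS) = 0 := by
    push_cast
    rw [hp0]
    exact zero_pow (by positivity)
  apply aux_teich_unique (Ideal.Quotient.mk IS) hkS hQ0
  · rw [← map_pow, hy]
  · rw [← pow_mul, mul_comm, pow_mul, hy]
  · rw [hresσ, map_pow]
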